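/- arXiv:1805.06537 — 2 statements merged into one kernel-verified Lean document; each statement's English description precedes it below -/
import Mathlib

section
/- For a continuous function y on [0,b] and α > 0, applying the Riemann–Liouville fractional integral of order α to the Caputo fractional derivative of order α ∈ (0,1) of a continuously differentiable function x recovers x up to its initial value: (I^α (D^α_C x))(t) = x(t) − x(0) for all t ∈ [0,b]. -/
open intervalIntegral Real MeasureTheory

lemma measurable_rpow_const' (c : ℝ) : Measurable fun v : ℝ => v ^ c := by
  have h : ∀ v : ℝ, v ^ c =
      if v = 0 then (if c = 0 then 1 else 0)
      else if 0 < v then Real.exp (Real.log v * c)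
      else Real.exp (Real.log v * c) * Real.cos (c * π) := by
    intro v
    rcases lt_trichotomy v 0 with h | h | h
    · rw [if_neg h.ne, if_neg (not_lt.mpr h.le), Real.rpow_def_of_neg h, mul_comm c π]
    · subst h
      rw [if_pos rfl]
      split_ifs with hc
      · simp [hc]
      · exact Real.zero_rpow hc
    · rw [if_neg h.ne', if_pos h, Real.rpow_def_of_pos h]
  simp only [h]
  apply Measurable.ite (MeasurableSet.singleton 0) measurable_const
  apply Measurable.ite (measurableSet_lt measurable_const measurable_id)
  · exact (Real.measurable_log.mul measurable_const).exp
  · exact ((Real.measurable_log.mul measurable_const).exp).mul measurable_const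

lemma beta_val {α : ℝ} (hα : 0 < α) (hα1 : α < 1) :
    ∫ x in (0:ℝ)..1, x ^ (-α) * (1 - x) ^ (α - 1) =
      Real.Gamma α * Real.Gamma (1 - α) := by
  have h1 : (0:ℝ) < 1 - α := by linarith
  have key := Complex.Gamma_mul_Gamma_eq_betaIntegral (s := (1 - α : ℝ)) (t := (α : ℝ))
    (by simpa using h1) (by simpa using hα)
  have h2 : ((1 - α : ℝ) : ℂ) + (α : ℝ) = 1 := by push_cast; ring
  rw [h2, Complex.Gamma_one, one_mul] at key
  have h3 : Complex.betaIntegral ((1 - α : ℝ) : ℂ) ((α : ℝ) : ℂ)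
      = ((∫ x in (0:ℝ)..1, x ^ (-α) * (1 - x) ^ (α - 1) : ℝ) : ℂ) := by
    rw [Complex.betaIntegral, ← intervalIntegral.integral_ofReal]
    refine intervalIntegral.integral_congr fun y hy => ?_
    rw [Set.uIcc_of_le (by norm_num : (0:ℝ) ≤ 1)] at hy
    push_cast
    rw [Complex.ofReal_cpow hy.1, Complex.ofReal_cpow (by linarith [hy.2] : (0:ℝ) ≤ 1 - y)]
    push_cast
    ring_nf
  rw [h3] at key
  rw [Complex.Gamma_ofReal, Complex.Gamma_ofReal, ← Complex.ofReal_mul] at key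
  have := Complex.ofReal_inj.mp key
  rw [← this]; ring

lemma inner_beta {α : ℝ} (hα : 0 < α) (hα1 : α < 1) {u t : ℝ} (hut : u < t) :
    ∫ s in u..t, (t - s) ^ (α - 1) * (s - u) ^ (-α) =
      Real.Gamma α * Real.Gamma (1 - α) := by
  have hc : t - u ≠ 0 := by intro h; linarith [sub_eq_zero.mp h]
  have hkey := intervalIntegral.integral_comp_mul_add (a := (0:ℝ)) (b := 1)
    (f := fun s => (t - s) ^ (α - 1) * (s - u) ^ (-α)) hc u
  simp only [mul_zero, zero_add, mul_one, sub_add_cancel] at hkey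
  have hcongr : ∀ σ ∈ Set.uIcc (0:ℝ) 1,
      (t - ((t - u) * σ + u)) ^ (α - 1) * (((t - u) * σ + u) - u) ^ (-α)
        = (t - u)⁻¹ * (σ ^ (-α) * (1 - σ) ^ (α - 1)) := by
    intro σ hσ
    rw [Set.uIcc_of_le (by norm_num : (0:ℝ) ≤ 1)] at hσ
    have h1 : t - ((t - u) * σ + u) = (t - u) * (1 - σ) := by ring
    have h2 : ((t - u) * σ + u) - u = (t - u) * σ := by ring
    rw [h1, h2, Real.mul_rpow (by linarith) (by linarith [hσ.2]),
      Real.mul_rpow (by linarith) hσ.1]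
    have h3 : (t - u) ^ (α - 1) * (t - u) ^ (-α) = (t - u)⁻¹ := by
      rw [← Real.rpow_add (by linarith), show α - 1 + -α = -1 by ring, Real.rpow_neg_one]
    calc (t - u) ^ (α - 1) * (1 - σ) ^ (α - 1) * ((t - u) ^ (-α) * σ ^ (-α))
        = ((t - u) ^ (α - 1) * (t - u) ^ (-α)) * (σ ^ (-α) * (1 - σ) ^ (α - 1)) := by ring
      _ = _ := by rw [h3]
  rw [intervalIntegral.integral_congr hcongr, intervalIntegral.integral_const_mul,
    beta_val hα hα1] at hkey
  have := hkey
  rw [smul_eq_mul] at this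
  field_simp at this
  linarith [this]

/-- The left Riemann–Liouville fractional integral of order `α`. -/
noncomputable def fracInt (α : ℝ) (y : ℝ → ℝ) (x : ℝ) : ℝ :=
  (1 / Real.Gamma α) * ∫ t in (0:ℝ)..x, (x - t) ^ (α - 1) * y t

/-- The left Caputo fractional derivative of order `α ∈ (0,1)`. -/
noncomputable def caputoDeriv (α : ℝ) (x : ℝ → ℝ) (t : ℝ) : ℝ :=
  (1 / Real.Gamma (1 - α)) * ∫ s in (0:ℝ)..t, (t - s) ^ (-α) * deriv x s

theorem fracInt_caputoDeriv (α b : ℝ) (hα : 0 < α) (hα1 : α < 1) (hb : 0 < b)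
    (x : ℝ → ℝ) (hx : ContDiff ℝ 1 x) :
    ∀ t ∈ Set.Icc (0:ℝ) b, fracInt α (caputoDeriv α x) t = x t - x 0 := by
  intro t ht
  obtain ⟨ht0, htb⟩ := ht
  rcases eq_or_lt_of_le ht0 with h0 | h0
  · rw [← h0]; simp [fracInt]
  clear ht0 htb hb b
  have hd : Continuous (deriv x) := hx.continuous_deriv le_rfl
  have hG1 : (0:ℝ) < Real.Gamma α := Real.Gamma_pos_of_pos hα
  have hG2 : (0:ℝ) < Real.Gamma (1 - α) := Real.Gamma_pos_of_pos (by linarith)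
  set C : ℝ := Real.Gamma α * Real.Gamma (1 - α) with hC
  obtain ⟨M, hM⟩ := isCompact_Icc.exists_bound_of_continuousOn
    (s := Set.Icc (0:ℝ) t) hd.continuousOn
  have hM0 : 0 ≤ M := le_trans (norm_nonneg _) (hM 0 ⟨le_refl 0, h0.le⟩)
  set f : ℝ × ℝ → ℝ := fun p =>
    if 0 ≤ p.2 ∧ p.2 ≤ p.1 ∧ p.1 ≤ t then
      (t - p.1) ^ (α - 1) * ((p.1 - p.2) ^ (-α) * deriv x p.2) else 0 with hf
  -- measurability
  have hfm : Measurable f := by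
    apply Measurable.ite
    · exact MeasurableSet.inter (measurableSet_le measurable_const measurable_snd)
        (MeasurableSet.inter (measurableSet_le measurable_snd measurable_fst)
          (measurableSet_le measurable_fst measurable_const))
    · exact ((measurable_rpow_const' (α - 1)).comp (measurable_const.sub measurable_fst)).mul
        (((measurable_rpow_const' (-α)).comp (measurable_fst.sub measurable_snd)).mul
          (hd.measurable.comp measurable_snd))
    · exact measurable_const
  -- representation of slices in s
  have hrep : ∀ s : ℝ, 0 ≤ s → s ≤ t → (fun u => f (s, u)) =
      Set.indicator (Set.Icc 0 s)
        (fun u => (t - s) ^ (α - 1) * ((s - u) ^ (-α) * deriv x u)) := by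
    intro s hs1 hs2
    funext u
    simp only [hf, Set.indicator_apply, Set.mem_Icc]
    by_cases h : 0 ≤ u ∧ u ≤ s
    · rw [if_pos ⟨h.1, h.2, hs2⟩, if_pos h]
    · rw [if_neg (fun hh => h ⟨hh.1, hh.2.1⟩), if_neg h]
  have hrep0 : ∀ s : ℝ, ¬(0 ≤ s ∧ s ≤ t) → (fun u => f (s, u)) = fun _ => 0 := by
    intro s hs
    funext u
    simp only [hf]
    rw [if_neg]
    rintro ⟨h1, h2, h3⟩
    exact hs ⟨h1.trans h2, h3⟩
  -- interval integrability of the u-kernel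
  have hkint : ∀ s : ℝ, IntervalIntegrable
      (fun u => (t - s) ^ (α - 1) * ((s - u) ^ (-α) * deriv x u)) volume 0 s := by
    intro s
    apply IntervalIntegrable.const_mul
    apply IntervalIntegrable.mul_continuousOn _ hd.continuousOn
    have h := (intervalIntegral.intervalIntegrable_rpow'
      (show (-1:ℝ) < -α by linarith) (a := s) (b := 0)).comp_sub_left s
    simpa using h
  have hslice : ∀ s : ℝ, Integrable (fun u => f (s, u)) volume := by
    intro s
    by_cases hs : 0 ≤ s ∧ s ≤ t
    · rw [hrep s hs.1 hs.2]
      exact ((intervalIntegrable_iff_integrableOn_Icc_of_le hs.1).mp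
        (hkint s)).integrable_indicator measurableSet_Icc
    · rw [hrep0 s hs]
      exact integrable_zero _ _ _
  -- the u-kernel value bound
  have hinner_bound : ∀ s : ℝ, 0 ≤ s → s ≤ t →
      (∫ u in (0:ℝ)..s, (s - u) ^ (-α)) ≤ t ^ (1 - α) / (1 - α) := by
    intro s hs1 hs2
    rw [intervalIntegral.integral_comp_sub_left (fun v => v ^ (-α)) s, sub_self, sub_zero,
      integral_rpow (Or.inl (by linarith : (-1:ℝ) < -α))]
    rw [Real.zero_rpow (by intro hh; linarith : -α + 1 ≠ 0)]
    have : s ^ (-α + 1) ≤ t ^ (-α + 1) :=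
      Real.rpow_le_rpow hs1 hs2 (by linarith)
    rw [show (1:ℝ) - α = -α + 1 by ring]
    have hpos : (0:ℝ) < -α + 1 := by linarith
    calc (s ^ (-α + 1) - 0) / (-α + 1) ≤ (t ^ (-α + 1) - 0) / (-α + 1) := by
          apply div_le_div_of_nonneg_right ?_ hpos.le
          · linarith
      _ = t ^ (-α + 1) / (-α + 1) := by ring
  -- product integrability
  have hint : Integrable f (volume.prod volume) := by
    apply (integrable_prod_iff hfm.aestronglyMeasurable).mpr
    constructor
    · exact ae_of_all _ hslice
    · -- Integrable (fun s => ∫ u, ‖f (s, u)‖)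
      set g : ℝ → ℝ := Set.indicator (Set.Icc 0 t)
        (fun s => M * (t ^ (1 - α) / (1 - α)) * (t - s) ^ (α - 1)) with hg
      have hgi : Integrable g volume := by
        apply IntegrableOn.integrable_indicator _ measurableSet_Icc
        apply (intervalIntegrable_iff_integrableOn_Icc_of_le h0.le).mp
        apply IntervalIntegrable.const_mul
        have h := (intervalIntegral.intervalIntegrable_rpow'
          (show (-1:ℝ) < α - 1 by linarith) (a := t) (b := 0)).comp_sub_left t
        simpa using h
      apply Integrable.mono' hgi
      · exact (hfm.norm.aestronglyMeasurable.integral_prod_right')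
      · refine ae_of_all _ fun s => ?_
        have hnn : 0 ≤ ∫ u, ‖f (s, u)‖ := integral_nonneg fun u => norm_nonneg _
        rw [Real.norm_of_nonneg hnn]
        by_cases hs : 0 ≤ s ∧ s ≤ t
        · have h1 : (∫ u, ‖f (s, u)‖) ≤
              ∫ u in Set.Icc (0:ℝ) s, (t - s) ^ (α - 1) * ((s - u) ^ (-α) * M) := by
            have hfs := hrep s hs.1 hs.2
            have : (fun u => ‖f (s, u)‖) = Set.indicator (Set.Icc 0 s)
                (fun u => ‖(t - s) ^ (α - 1) * ((s - u) ^ (-α) * deriv x u)‖) := by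
              funext u
              rw [show f (s, u) = _ from congrFun hfs u, Set.indicator_apply,
                Set.indicator_apply]
              split_ifs <;> simp
            rw [this, MeasureTheory.integral_indicator measurableSet_Icc]
            apply setIntegral_mono_on
            · exact ((intervalIntegrable_iff_integrableOn_Icc_of_le hs.1).mp (hkint s)).norm
            · apply (intervalIntegrable_iff_integrableOn_Icc_of_le hs.1).mp
              apply IntervalIntegrable.const_mul
              apply IntervalIntegrable.mul_const
              have h := (intervalIntegral.intervalIntegrable_rpow'
                (show (-1:ℝ) < -α by linarith) (a := s) (b := 0)).comp_sub_left s
              simpa using h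
            · exact measurableSet_Icc
            · intro u hu
              rw [norm_mul, norm_mul]
              have e1 : 0 ≤ t - s := by linarith [hs.2]
              have e2 : 0 ≤ s - u := by linarith [hu.2]
              rw [Real.norm_of_nonneg (Real.rpow_nonneg e1 _),
                Real.norm_of_nonneg (Real.rpow_nonneg e2 _)]
              have hMu := hM u ⟨hu.1, le_trans hu.2 hs.2⟩
              have e3 : 0 ≤ (s - u) ^ (-α) := Real.rpow_nonneg e2 _
              have e4 : 0 ≤ (t - s) ^ (α - 1) := Real.rpow_nonneg e1 _
              gcongr
          have h2 : (∫ u in Set.Icc (0:ℝ) s, (t - s) ^ (α - 1) * ((s - u) ^ (-α) * M))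
              ≤ M * (t ^ (1 - α) / (1 - α)) * (t - s) ^ (α - 1) := by
            rw [integral_Icc_eq_integral_Ioc, ← intervalIntegral.integral_of_le hs.1,
              intervalIntegral.integral_const_mul]
            have : (∫ u in (0:ℝ)..s, (s - u) ^ (-α) * M)
                = (∫ u in (0:ℝ)..s, (s - u) ^ (-α)) * M := intervalIntegral.integral_mul_const _ _
            rw [this]
            have hb1 := hinner_bound s hs.1 hs.2
            have e1 : 0 ≤ (t - s) ^ (α - 1) := Real.rpow_nonneg (by linarith [hs.2]) _
            have e2 : 0 ≤ ∫ u in (0:ℝ)..s, (s - u) ^ (-α) := by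
              rw [intervalIntegral.integral_of_le hs.1]
              apply setIntegral_nonneg measurableSet_Ioc
              intro u hu
              exact Real.rpow_nonneg (by linarith [hu.2]) _
            calc (t - s) ^ (α - 1) * ((∫ u in (0:ℝ)..s, (s - u) ^ (-α)) * M)
                ≤ (t - s) ^ (α - 1) * ((t ^ (1 - α) / (1 - α)) * M) := by gcongr
              _ = M * (t ^ (1 - α) / (1 - α)) * (t - s) ^ (α - 1) := by ring
          calc (∫ u, ‖f (s, u)‖) ≤ _ := h1
            _ ≤ _ := h2
            _ = g s := by rw [hg, Set.indicator_of_mem (Set.mem_Icc.mpr hs)]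
        · rw [hg, Set.indicator_of_notMem (by simpa [Set.mem_Icc] using hs)]
          have hz : ∀ u, f (s, u) = 0 := fun u => congrFun (hrep0 s hs) u
          simp [hz]
  -- Fubini
  have hswap : (∫ s : ℝ, ∫ u : ℝ, f (s, u)) = ∫ u : ℝ, ∫ s : ℝ, f (s, u) :=
    integral_integral_swap (f := fun s u => f (s, u)) hint
  -- evaluate LHS
  have hL : (∫ s : ℝ, ∫ u : ℝ, f (s, u)) =
      ∫ s in (0:ℝ)..t, (t - s) ^ (α - 1) * ∫ u in (0:ℝ)..s, (s - u) ^ (-α) * deriv x u := by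
    have h1 : ∀ s : ℝ, (∫ u : ℝ, f (s, u)) = Set.indicator (Set.Icc 0 t)
        (fun s => (t - s) ^ (α - 1) * ∫ u in (0:ℝ)..s, (s - u) ^ (-α) * deriv x u) s := by
      intro s
      by_cases hs : s ∈ Set.Icc (0:ℝ) t
      · rw [Set.indicator_of_mem hs, hrep s hs.1 hs.2,
          MeasureTheory.integral_indicator measurableSet_Icc, integral_Icc_eq_integral_Ioc,
          ← intervalIntegral.integral_of_le hs.1, intervalIntegral.integral_const_mul]
      · rw [Set.indicator_of_notMem hs, hrep0 s (by simpa [Set.mem_Icc] using hs)]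
        simp
    rw [show (fun s : ℝ => ∫ u : ℝ, f (s, u)) = _ from funext h1,
      MeasureTheory.integral_indicator measurableSet_Icc, integral_Icc_eq_integral_Ioc,
      ← intervalIntegral.integral_of_le h0.le]
  -- evaluate RHS
  have hR : (∫ u : ℝ, ∫ s : ℝ, f (s, u)) = C * (x t - x 0) := by
    have h1 : ∀ u : ℝ, u ≠ t → (∫ s : ℝ, f (s, u)) =
        Set.indicator (Set.Icc 0 t) (fun u => C * deriv x u) u := by
      intro u hu
      by_cases hmem : u ∈ Set.Icc (0:ℝ) t
      · have hut : u < t := lt_of_le_of_ne hmem.2 hu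
        have hrepu : (fun s => f (s, u)) = Set.indicator (Set.Icc u t)
            (fun s => ((t - s) ^ (α - 1) * (s - u) ^ (-α)) * deriv x u) := by
          funext s
          simp only [hf, Set.indicator_apply, Set.mem_Icc]
          by_cases h : u ≤ s ∧ s ≤ t
          · rw [if_pos ⟨hmem.1, h.1, h.2⟩, if_pos h, mul_assoc]
          · rw [if_neg (fun hh => h ⟨hh.2.1, hh.2.2⟩), if_neg h]
        rw [Set.indicator_of_mem hmem, hrepu, MeasureTheory.integral_indicator measurableSet_Icc,
          integral_Icc_eq_integral_Ioc, ← intervalIntegral.integral_of_le hmem.2,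
          intervalIntegral.integral_mul_const, inner_beta hα hα1 hut, hC]
      · rw [Set.indicator_of_notMem hmem]
        have : ∀ s, f (s, u) = 0 := by
          intro s
          simp only [hf]
          rw [if_neg]
          rintro ⟨h1, h2, h3⟩
          exact hmem ⟨h1, h2.trans h3⟩
        simp [this]
    have hae : (fun u : ℝ => ∫ s : ℝ, f (s, u)) =ᵐ[volume]
        Set.indicator (Set.Icc 0 t) (fun u => C * deriv x u) := by
      have hne : ∀ᵐ u : ℝ, u ≠ t := by
        rw [ae_iff]
        have : {u : ℝ | ¬u ≠ t} = {t} := by ext u; simp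
        rw [this]
        exact measure_singleton t
      filter_upwards [hne] with u hu using h1 u hu
    rw [integral_congr_ae hae, MeasureTheory.integral_indicator measurableSet_Icc,
      integral_Icc_eq_integral_Ioc, ← intervalIntegral.integral_of_le h0.le,
      intervalIntegral.integral_const_mul,
      intervalIntegral.integral_deriv_eq_sub
        (fun y _ => (hx.differentiable one_ne_zero).differentiableAt)
        (hd.intervalIntegrable 0 t)]
  -- combine
  have hfrac : fracInt α (caputoDeriv α x) t
      = (1 / Real.Gamma α) * ((1 / Real.Gamma (1 - α)) *
        ∫ s in (0:ℝ)..t, (t - s) ^ (α - 1) * ∫ u in (0:ℝ)..s, (s - u) ^ (-α) * deriv x u) := by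
    rw [fracInt]
    congr 1
    rw [← intervalIntegral.integral_const_mul]
    refine intervalIntegral.integral_congr fun s _ => ?_
    rw [caputoDeriv]
    ring
  rw [hfrac, ← hL, hswap, hR, hC]
  field_simp
end

section
/- The trapezoidal fractional quadrature formula is exact for linear functions: for y(x) = x and every i ≥ 1, ∑_{j=0}^{i} ᵀϖ_{ij}^{(α)} · (jh) = (1/Γ(α)) ∫₀^{ih} (ih − t)^{α−1} t dt = (ih)^{α+1}/Γ(α+2). -/
open Real Finset

/-- The trapezoidal fractional integration weights. -/
noncomputable def trapW (α h : ℝ) (i j : ℕ) : ℝ :=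
  if i = 0 then 0
  else if j = 0 then
    h ^ α / Real.Gamma (α + 2) * (((i : ℝ) - 1) ^ (α + 1) - ((i : ℝ) - 1 - α) * (i : ℝ) ^ α)
  else if j = i then h ^ α / Real.Gamma (α + 2)
  else if j < i then
    h ^ α / Real.Gamma (α + 2) *
      (((i : ℝ) - (j : ℝ) + 1) ^ (α + 1) + ((i : ℝ) - (j : ℝ) - 1) ^ (α + 1)
        - 2 * ((i : ℝ) - (j : ℝ)) ^ (α + 1))
  else 0

private lemma tele_aux (f : ℝ → ℝ) : ∀ m : ℕ,
    ∑ k ∈ Finset.range m, ((m : ℝ) - k) * (f ((k:ℝ)+2) - 2 * f ((k:ℝ)+1) + f k)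
      = f ((m:ℝ)+1) - f 1 - m * (f 1 - f 0) := by
  intro m
  induction m with
  | zero => simp
  | succ m ih =>
    push_cast
    have tel : ∑ k ∈ Finset.range (m+1),
        (f ((k:ℝ)+2) - 2 * f ((k:ℝ)+1) + f k)
        = f ((m:ℝ)+2) - f ((m:ℝ)+1) - (f 1 - f 0) := by
      have := Finset.sum_range_sub (fun k => f ((k:ℝ)+1) - f (k:ℝ)) (m+1)
      simp only [Nat.cast_add, Nat.cast_one] at this
      calc ∑ k ∈ Finset.range (m+1), (f ((k:ℝ)+2) - 2 * f ((k:ℝ)+1) + f k)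
          = ∑ k ∈ Finset.range (m+1),
              ((f (((k:ℝ)+1)+1) - f ((k:ℝ)+1)) - (f ((k:ℝ)+1) - f (k:ℝ))) := by
            apply Finset.sum_congr rfl; intro k _; ring_nf
        _ = (f (((m:ℝ)+1)+1) - f ((m:ℝ)+1)) - (f ((0:ℝ)+1) - f 0) := by
            exact_mod_cast this
        _ = f ((m:ℝ)+2) - f ((m:ℝ)+1) - (f 1 - f 0) := by norm_num; ring_nf
    calc ∑ k ∈ Finset.range (m+1), (((m:ℝ)+1) - k) * (f ((k:ℝ)+2) - 2 * f ((k:ℝ)+1) + f k)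
        = ∑ k ∈ Finset.range (m+1), (((m:ℝ) - k) * (f ((k:ℝ)+2) - 2 * f ((k:ℝ)+1) + f k)
            + (f ((k:ℝ)+2) - 2 * f ((k:ℝ)+1) + f k)) := by
          apply Finset.sum_congr rfl; intro k _; push_cast; ring
      _ = (∑ k ∈ Finset.range (m+1), ((m:ℝ) - k) * (f ((k:ℝ)+2) - 2 * f ((k:ℝ)+1) + f k))
            + (f ((m:ℝ)+2) - f ((m:ℝ)+1) - (f 1 - f 0)) := by
          rw [Finset.sum_add_distrib, tel]
      _ = (∑ k ∈ Finset.range m, ((m:ℝ) - k) * (f ((k:ℝ)+2) - 2 * f ((k:ℝ)+1) + f k))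
            + (f ((m:ℝ)+2) - f ((m:ℝ)+1) - (f 1 - f 0)) := by
          rw [Finset.sum_range_succ]; simp
      _ = f (((m:ℝ)+1)+1) - f 1 - ((m:ℝ)+1) * (f 1 - f 0) := by
          rw [ih]; ring_nf

private lemma sum_eq_aux (α h : ℝ) (hα : 0 < α) (hh : 0 < h) (m : ℕ) :
    ∑ j ∈ Finset.range (m + 2), trapW α h (m+1) j * ((j : ℝ) * h)
      = h ^ α / Real.Gamma (α + 2) * h * ((m:ℝ)+1) ^ (α+1) := by
  set C := h ^ α / Real.Gamma (α + 2) with hC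
  set f : ℝ → ℝ := fun x => x ^ (α+1) with hf
  clear_value f
  have hlast : trapW α h (m+1) (m+1) = C := by
    simp [trapW, hC]
  have hmid : ∀ k, k < m → trapW α h (m+1) (k+1)
      = C * (f ((m:ℝ) - k + 1) + f ((m:ℝ) - k - 1) - 2 * f ((m:ℝ) - k)) := by
    intro k hk
    have h1 : k + 1 ≠ m + 1 := by omega
    have h2 : k + 1 < m + 1 := by omega
    simp only [trapW, Nat.succ_ne_zero, if_false, if_neg h1, if_pos h2, hf]
    rw [hC]
    push_cast
    ring_nf
  rw [Finset.sum_range_succ, hlast]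
  rw [Finset.sum_range_succ']
  rw [show ((0:ℕ):ℝ) * h = 0 by simp, mul_zero, add_zero]
  have hstep : ∑ k ∈ Finset.range m, trapW α h (m+1) (k+1) * (((k+1:ℕ) : ℝ) * h)
      = ∑ k ∈ Finset.range m,
          (C * h) * (((k:ℝ)+1) * (f ((m:ℝ) - k + 1) + f ((m:ℝ) - k - 1) - 2 * f ((m:ℝ) - k))) := by
    apply Finset.sum_congr rfl
    intro k hk
    rw [hmid k (Finset.mem_range.mp hk)]
    push_cast
    ring
  rw [hstep]
  have hrefl : ∑ k ∈ Finset.range m,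
        (C * h) * (((k:ℝ)+1) * (f ((m:ℝ) - k + 1) + f ((m:ℝ) - k - 1) - 2 * f ((m:ℝ) - k)))
      = ∑ k ∈ Finset.range m,
        (C * h) * (((m:ℝ) - k) * (f ((k:ℝ)+2) - 2 * f ((k:ℝ)+1) + f k)) := by
    rw [← Finset.sum_range_reflect]
    apply Finset.sum_congr rfl
    intro k hk
    have hk' := Finset.mem_range.mp hk
    have hc : ((m - 1 - k : ℕ) : ℝ) = (m:ℝ) - 1 - k := by
      have : m - 1 - k = m - (k+1) := by omega
      rw [this, Nat.cast_sub (by omega)]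
      push_cast; ring
    rw [hc]
    ring_nf
  rw [hrefl, ← Finset.mul_sum, tele_aux]
  have hf0 : f 0 = 0 := by
    simp only [hf]; exact Real.zero_rpow (by positivity)
  have hf1 : f 1 = 1 := by simp [hf]
  rw [hf0, hf1]
  simp only [hf]
  push_cast
  ring

private lemma integral_eq_aux (α : ℝ) (hα : 0 < α) (a : ℝ) (ha : 0 < a) :
    ∫ t in (0:ℝ)..a, (a - t) ^ (α-1) * t = a ^ (α+1) / (α * (α+1)) := by
  have step1 : ∫ t in (0:ℝ)..a, (a - t) ^ (α-1) * t
      = ∫ s in (0:ℝ)..a, s ^ (α-1) * (a - s) := by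
    have := intervalIntegral.integral_comp_sub_left (a := (0:ℝ)) (b := a)
      (fun s => s ^ (α-1) * (a - s)) a
    simp only [sub_zero, sub_self] at this
    rw [← this]
    apply intervalIntegral.integral_congr
    intro t _
    simp only
    ring_nf
  rw [step1]
  have step2 : ∫ s in (0:ℝ)..a, s ^ (α-1) * (a - s)
      = ∫ s in (0:ℝ)..a, (a * s ^ (α-1) - s ^ α) := by
    apply intervalIntegral.integral_congr
    intro s hs
    rw [Set.uIcc_of_le ha.le] at hs
    simp only
    rcases eq_or_lt_of_le hs.1 with h0 | h0
    · rw [← h0]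
      rw [Real.zero_rpow (by positivity : α ≠ 0)]
      ring
    · have hsa : s ^ α = s ^ (α-1) * s := by
        rw [← Real.rpow_add_one (ne_of_gt h0)]; ring_nf
      rw [hsa]; ring
  rw [step2]
  have i1 : IntervalIntegrable (fun s : ℝ => a * s ^ (α-1)) MeasureTheory.volume 0 a :=
    (intervalIntegral.intervalIntegrable_rpow' (by linarith)).const_mul a
  have i2 : IntervalIntegrable (fun s : ℝ => s ^ α) MeasureTheory.volume 0 a :=
    intervalIntegral.intervalIntegrable_rpow' (by linarith)
  rw [intervalIntegral.integral_sub i1 i2, intervalIntegral.integral_const_mul,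
    integral_rpow (Or.inl (by linarith)), integral_rpow (Or.inl (by linarith))]
  rw [Real.zero_rpow (show α - 1 + 1 ≠ 0 by ring_nf; exact hα.ne'),
    Real.zero_rpow (by positivity : α + 1 ≠ 0)]
  have haa : a * a ^ α = a ^ (α + 1) := by
    rw [Real.rpow_add_one (ne_of_gt ha)]; ring
  rw [sub_zero, sub_zero, show α - 1 + 1 = α from by ring, ← haa]
  field_simp
  ring

theorem trapW_exact_for_linear (α h : ℝ) (hα : 0 < α) (hh : 0 < h) :
    ∀ i : ℕ, 1 ≤ i →
      (∑ j ∈ Finset.range (i + 1), trapW α h i j * ((j : ℝ) * h)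
          = (1 / Real.Gamma α) * ∫ t in (0:ℝ)..((i : ℝ) * h), ((i : ℝ) * h - t) ^ (α - 1) * t) ∧
      (∑ j ∈ Finset.range (i + 1), trapW α h i j * ((j : ℝ) * h)
          = ((i : ℝ) * h) ^ (α + 1) / Real.Gamma (α + 2)) := by
  intro i hi
  obtain ⟨m, rfl⟩ : ∃ m, i = m + 1 := ⟨i - 1, by omega⟩
  have hipos : (0:ℝ) < ((m:ℕ)+1 : ℕ) := by positivity
  have ha : (0:ℝ) < ((m+1 : ℕ) : ℝ) * h := by positivity
  have hGα : Real.Gamma α ≠ 0 := (Real.Gamma_pos_of_pos hα).ne'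
  have hΓ : Real.Gamma (α + 2) = (α + 1) * α * Real.Gamma α := by
    rw [show α + 2 = (α + 1) + 1 from by ring,
      Real.Gamma_add_one (by positivity : α + 1 ≠ 0),
      Real.Gamma_add_one hα.ne']
    ring
  have part2 : ∑ j ∈ Finset.range (m + 1 + 1), trapW α h (m+1) j * ((j : ℝ) * h)
      = (((m+1 : ℕ) : ℝ) * h) ^ (α + 1) / Real.Gamma (α + 2) := by
    rw [sum_eq_aux α h hα hh m]
    have hmul : (((m+1 : ℕ) : ℝ) * h) ^ (α + 1)
        = ((m:ℝ)+1) ^ (α+1) * h ^ (α+1) := by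
      rw [← Real.mul_rpow (by positivity) hh.le]
      push_cast; ring_nf
    rw [hmul, Real.rpow_add_one hh.ne']
    ring
  refine ⟨?_, part2⟩
  rw [part2, integral_eq_aux α hα _ ha, hΓ]
  field_simp
end
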